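/- Let n ≥ 2 be an integer, K a field, and R_n the rose graph with n petals. Let P and Q be elements of GL_n(L_K(R_n)_0) with P φ_P(Q) = I_n, and for m ≥ 1 write P_m = (p^{(m)}_{ij}), P_m^{-1} = (p^{(-m)}_{ij}), Q_m = (q^{(m)}_{ij}) and Q_m^{-1} = (q^{(-m)}_{ij}). Then the graded injective K-algebra homomorphism θ_P : L_K(R_n) → L_K(R_n)^{φ_P} (determined by θ_P(v) = v, θ_P(e_i) = e_i and θ_P(e_i*) = Σ_{k=1}^n q^{(-1)}_{ik} e_k*) is an isomorphism if and only if p^{(-m)}_{ij}, q^{(m)}_{ij} and q^{(-m)}_{ij} belong to the image of θ_P for all m ≥ 1 and all 1 ≤ i, j ≤ n. -/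

import Mathlib

/-- Generators of the Leavitt path algebra of the rose with `n` petals:
the edges `e_1, …, e_n` and the ghost edges `e_1*, …, e_n*` (the single vertex `v` is the
identity `1`). -/
inductive RGen (n : ℕ) : Type
  | e : Fin n → RGen n
  | g : Fin n → RGen n

/-- The defining relations of `L_K(R_n)`: `e_i* e_j = δ_{ij} v` and `Σ_i e_i e_i* = v`,
where `v = 1`. -/
inductive RoseRel (K : Type) [Field K] (n : ℕ) :
    FreeAlgebra K (RGen n) → FreeAlgebra K (RGen n) → Prop
  | ghostEdgeSame (i : Fin n) :
      RoseRel K n (FreeAlgebra.ι K (RGen.g i) * FreeAlgebra.ι K (RGen.e i)) 1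
  | ghostEdgeNe (i j : Fin n) (h : i ≠ j) :
      RoseRel K n (FreeAlgebra.ι K (RGen.g i) * FreeAlgebra.ι K (RGen.e j)) 0
  | ck2 :
      RoseRel K n (∑ i : Fin n, FreeAlgebra.ι K (RGen.e i) * FreeAlgebra.ι K (RGen.g i)) 1

/-- The Leavitt path algebra `L_K(R_n)` of the rose with `n` petals. -/
abbrev LRose (K : Type) [Field K] (n : ℕ) : Type := RingQuot (RoseRel K n)

/-- The edge `e_i` as an element of `L_K(R_n)`. -/
noncomputable def ee (K : Type) [Field K] (n : ℕ) (i : Fin n) : LRose K n :=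
  RingQuot.mkAlgHom K (RoseRel K n) (FreeAlgebra.ι K (RGen.e i))

/-- The ghost edge `e_i*` as an element of `L_K(R_n)`. -/
noncomputable def gg (K : Type) [Field K] (n : ℕ) (i : Fin n) : LRose K n :=
  RingQuot.mkAlgHom K (RoseRel K n) (FreeAlgebra.ι K (RGen.g i))

/-- The degree `d` component of the ℤ-grading of `L_K(R_n)`: the `K`-span of the
elements `p q*` with `|p| - |q| = d`. -/
noncomputable def rComponent (K : Type) [Field K] (n : ℕ) (d : ℤ) :
    Submodule K (LRose K n) :=
  Submodule.span K {x : LRose K n | ∃ p q : List (Fin n),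
    (p.length : ℤ) - (q.length : ℤ) = d ∧
    x = (p.map (ee K n)).prod * (q.reverse.map (gg K n)).prod}

/-- A map is graded when it preserves every homogeneous component. -/
def RGraded (K : Type) [Field K] (n : ℕ) (f : LRose K n → LRose K n) : Prop :=
  ∀ d : ℤ, ∀ x ∈ rComponent K n d, f x ∈ rComponent K n d

/-- The defining property of the endomorphism `φ_P` of `L_K(R_n)` attached to a matrix
`P` with inverse `P'`: it sends `e_i ↦ Σ_k e_k p_{k i}` and `e_i* ↦ Σ_k p'_{i k} e_k*`
(and `v = 1 ↦ 1` automatically). -/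
def RPhiProps (K : Type) [Field K] (n : ℕ) (P P' : Matrix (Fin n) (Fin n) (LRose K n))
    (φ : LRose K n →ₐ[K] LRose K n) : Prop :=
  (∀ i, φ (ee K n i) = ∑ k, ee K n k * P k i) ∧
  (∀ i, φ (gg K n i) = ∑ k, P' i k * gg K n k)

section Aux
section Base
variable (K : Type) [Field K] (n : ℕ)

lemma gg_mul_ee (i j : Fin n) :
    gg K n i * ee K n j = if i = j then 1 else 0 := by
  unfold gg ee
  rw [← map_mul]
  by_cases h : i = j
  · subst h
    rw [RingQuot.mkAlgHom_rel K (RoseRel.ghostEdgeSame i), map_one, if_pos rfl]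
  · simp only [if_neg h]
    rw [RingQuot.mkAlgHom_rel K (RoseRel.ghostEdgeNe i j h), map_zero]

lemma sum_ee_gg : ∑ i : Fin n, ee K n i * gg K n i = 1 := by
  unfold gg ee
  simp only [← map_mul]
  rw [← map_sum, RingQuot.mkAlgHom_rel K (RoseRel.ck2), map_one]

/-- monomial membership -/
lemma monomial_mem (p q : List (Fin n)) :
    (p.map (ee K n)).prod * (q.reverse.map (gg K n)).prod ∈
      rComponent K n ((p.length : ℤ) - q.length) :=
  Submodule.subset_span ⟨p, q, rfl, rfl⟩

lemma one_mem_comp0 : (1 : LRose K n) ∈ rComponent K n 0 := by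
  simpa using monomial_mem K n [] []

lemma ee_mem_comp1 (i : Fin n) : ee K n i ∈ rComponent K n 1 := by
  simpa using monomial_mem K n [i] []

lemma gg_mem_compm1 (i : Fin n) : gg K n i ∈ rComponent K n (-1) := by
  simpa using monomial_mem K n [] [i]

lemma ee_mul_comp (i : Fin n) (d : ℤ) (x : LRose K n) (hx : x ∈ rComponent K n d) :
    ee K n i * x ∈ rComponent K n (d + 1) := by
  induction hx using Submodule.span_induction with
  | mem x hx =>
    obtain ⟨p, q, hd, rfl⟩ := hx
    have : ee K n i * ((p.map (ee K n)).prod * (q.reverse.map (gg K n)).prod)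
        = ((i :: p).map (ee K n)).prod * (q.reverse.map (gg K n)).prod := by
      simp [mul_assoc]
    rw [this]
    have := monomial_mem K n (i :: p) q
    simpa [← hd, add_comm, add_sub_assoc, sub_add_eq_add_sub] using this
  | zero => simpa using Submodule.zero_mem _
  | add x y _ _ hx hy => rw [mul_add]; exact Submodule.add_mem _ hx hy
  | smul a x _ hx => rw [mul_smul_comm]; exact Submodule.smul_mem _ a hx

lemma gg_mul_comp (i : Fin n) (d : ℤ) (x : LRose K n) (hx : x ∈ rComponent K n d) :
    gg K n i * x ∈ rComponent K n (d - 1) := by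
  induction hx using Submodule.span_induction with
  | mem x hx =>
    obtain ⟨p, q, hd, rfl⟩ := hx
    cases p with
    | nil =>
      have : gg K n i * (([] : List (Fin n)).map (ee K n)).prod *
          (q.reverse.map (gg K n)).prod
          = ((q ++ [i]).reverse.map (gg K n)).prod := by
        simp
      rw [← mul_assoc, this]
      have h2' := monomial_mem K n [] (q ++ [i])
      have h2 : ((q ++ [i]).reverse.map (gg K n)).prod ∈
          rComponent K n ((([] : List (Fin n)).length : ℤ) - ((q ++ [i]).length : ℤ)) := by
        simpa using h2'
      have : ((([] : List (Fin n)).length : ℤ) - ((q ++ [i]).length : ℤ)) = d - 1 := by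
        simp at hd ⊢; omega
      rwa [this] at h2
    | cons j p' =>
      have : gg K n i * (((j :: p').map (ee K n)).prod * (q.reverse.map (gg K n)).prod)
          = (gg K n i * ee K n j) * ((p'.map (ee K n)).prod * (q.reverse.map (gg K n)).prod) := by
        simp [mul_assoc]
      rw [this, gg_mul_ee]
      by_cases h : i = j
      · rw [if_pos h, one_mul]
        have h2 := monomial_mem K n p' q
        have : ((p'.length : ℤ) - (q.length : ℤ)) = d - 1 := by
          simp at hd ⊢; omega
        rwa [this] at h2
      · rw [if_neg h, zero_mul]; exact Submodule.zero_mem _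
  | zero => simpa using Submodule.zero_mem _
  | add x y _ _ hx hy => rw [mul_add]; exact Submodule.add_mem _ hx hy
  | smul a x _ hx => rw [mul_smul_comm]; exact Submodule.smul_mem _ a hx

lemma comp_mul_comp (d d' : ℤ) (x y : LRose K n)
    (hx : x ∈ rComponent K n d) (hy : y ∈ rComponent K n d') :
    x * y ∈ rComponent K n (d + d') := by
  induction hx using Submodule.span_induction with
  | mem x hx =>
    obtain ⟨p, q, hd, rfl⟩ := hx
    -- first multiply by the g's (as list q.reverse), then the e's
    have key : ∀ (l : List (Fin n)) (c : ℤ) (z : LRose K n), z ∈ rComponent K n c →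
        (l.map (gg K n)).prod * z ∈ rComponent K n (c - l.length) := by
      intro l
      induction l with
      | nil => intro c z hz; simpa using hz
      | cons a l ih =>
        intro c z hz
        have h1 := gg_mul_comp K n a _ _ (ih c z hz)
        have : gg K n a * ((l.map (gg K n)).prod * z)
            = ((a :: l).map (gg K n)).prod * z := by simp [mul_assoc]
        rw [this] at h1
        have he : c - (l.length : ℤ) - 1 = c - ((a :: l).length : ℤ) := by
          simp; omega
        rwa [he] at h1
    have keyE : ∀ (l : List (Fin n)) (c : ℤ) (z : LRose K n), z ∈ rComponent K n c →
        (l.map (ee K n)).prod * z ∈ rComponent K n (c + l.length) := by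
      intro l
      induction l with
      | nil => intro c z hz; simpa using hz
      | cons a l ih =>
        intro c z hz
        have h1 := ee_mul_comp K n a _ _ (ih c z hz)
        have : ee K n a * ((l.map (ee K n)).prod * z)
            = ((a :: l).map (ee K n)).prod * z := by simp [mul_assoc]
        rw [this] at h1
        have he : c + (l.length : ℤ) + 1 = c + ((a :: l).length : ℤ) := by
          simp; omega
        rwa [he] at h1
    rw [mul_assoc]
    have h1 := key q.reverse d' y hy
    have h2 := keyE p _ _ h1
    have : d' - (q.reverse.length : ℤ) + (p.length : ℤ) = d + d' := by
      simp at hd ⊢; omega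
    rwa [this] at h2
  | zero => simpa using Submodule.zero_mem _
  | add x y _ _ hx hy => rw [add_mul]; exact Submodule.add_mem _ hx hy
  | smul a x _ hx => rw [smul_mul_assoc]; exact Submodule.smul_mem _ a hx

end Base

section Part2
variable (K : Type) [Field K] (n : ℕ)

lemma list_sum_mul_sum {R : Type} [NonUnitalNonAssocSemiring R] (la lb : List (ℤ × R)) :
    (la.map Prod.snd).sum * (lb.map Prod.snd).sum =
      ((la.flatMap (fun p => lb.map (fun q => (p.1 + q.1, p.2 * q.2)))).map Prod.snd).sum := by
  induction la with
  | nil => simp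
  | cons p la ih =>
    simp only [List.map_cons, List.sum_cons, add_mul, List.flatMap_cons, List.map_append,
      List.sum_append, List.map_map, ih]
    congr 1
    rw [show (Prod.snd ∘ fun q : ℤ × R => (p.1 + q.1, p.2 * q.2)) = fun q => p.2 * q.2 from rfl]
    clear ih
    induction lb with
    | nil => simp
    | cons q lb ih2 => simp only [List.map_cons, List.sum_cons, mul_add, ih2]

lemma single_zero_one :
    AddMonoidAlgebra.single (0 : ℤ) (1 : LRose K n) = 1 :=
  AddMonoidAlgebra.one_def.symm

/-- every element decomposes as a finite sum of homogeneous pieces -/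
lemma decompose (x : LRose K n) :
    ∃ l : List (ℤ × LRose K n), (∀ p ∈ l, p.2 ∈ rComponent K n p.1) ∧
      x = (l.map Prod.snd).sum := by
  obtain ⟨y, rfl⟩ := RingQuot.mkAlgHom_surjective K (RoseRel K n) x
  induction y using FreeAlgebra.induction with
  | grade0 r =>
    refine ⟨[(0, RingQuot.mkAlgHom K (RoseRel K n) (algebraMap K _ r))], ?_, by simp⟩
    intro p hp
    simp only [List.mem_singleton] at hp
    subst hp
    have : RingQuot.mkAlgHom K (RoseRel K n) (algebraMap K _ r)
        = r • (1 : LRose K n) := by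
      rw [AlgHom.commutes]
      simp [Algebra.algebraMap_eq_smul_one]
    rw [this]
    exact Submodule.smul_mem _ _ (one_mem_comp0 K n)
  | grade1 x =>
    cases x with
    | e i =>
      refine ⟨[(1, ee K n i)], ?_, by simp [ee]⟩
      rintro p hp
      simp only [List.mem_singleton] at hp
      subst hp
      exact ee_mem_comp1 K n i
    | g i =>
      refine ⟨[(-1, gg K n i)], ?_, by simp [gg]⟩
      rintro p hp
      simp only [List.mem_singleton] at hp
      subst hp
      exact gg_mem_compm1 K n i
  | mul a b iha ihb =>
    obtain ⟨la, hla, ha⟩ := iha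
    obtain ⟨lb, hlb, hb⟩ := ihb
    refine ⟨la.flatMap (fun p => lb.map (fun q => (p.1 + q.1, p.2 * q.2))), ?_, ?_⟩
    · intro p hp
      simp only [List.mem_flatMap, List.mem_map] at hp
      obtain ⟨a', ha', b', hb', rfl⟩ := hp
      exact comp_mul_comp K n _ _ _ _ (hla a' ha') (hlb b' hb')
    · rw [map_mul, ha, hb]
      exact list_sum_mul_sum la lb
  | add a b iha ihb =>
    obtain ⟨la, hla, ha⟩ := iha
    obtain ⟨lb, hlb, hb⟩ := ihb
    refine ⟨la ++ lb, ?_, by rw [map_add, ha, hb]; simp⟩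
    intro p hp
    rcases List.mem_append.1 hp with h | h
    exacts [hla p h, hlb p h]

/-- The Laurent "grading" morphism. -/
noncomputable def laur : LRose K n →ₐ[K] AddMonoidAlgebra (LRose K n) ℤ :=
  RingQuot.liftAlgHom K ⟨FreeAlgebra.lift K (fun x => match x with
    | RGen.e i => AddMonoidAlgebra.single 1 (ee K n i)
    | RGen.g i => AddMonoidAlgebra.single (-1) (gg K n i)), by
      intro x y h
      induction h with
      | ghostEdgeSame i =>
        simp only [map_mul, FreeAlgebra.lift_ι_apply, map_one]
        rw [AddMonoidAlgebra.single_mul_single,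
          show ((-1 : ℤ) + 1 = 0) from by ring,
          show gg K n i * ee K n i = 1 from by simpa using gg_mul_ee K n i i,
          single_zero_one]
      | ghostEdgeNe i j hij =>
        simp only [map_mul, FreeAlgebra.lift_ι_apply, map_zero]
        rw [AddMonoidAlgebra.single_mul_single,
          show gg K n i * ee K n j = 0 from by simpa [hij] using gg_mul_ee K n i j]
        simp
      | ck2 =>
        simp only [map_sum, map_mul, FreeAlgebra.lift_ι_apply, map_one]
        simp only [AddMonoidAlgebra.single_mul_single,
          show ((1 : ℤ) + -1 = 0) from by ring]
        rw [show (∑ i : Fin n, AddMonoidAlgebra.single (0:ℤ) (ee K n i * gg K n i))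
            = AddMonoidAlgebra.single (0:ℤ) (∑ i : Fin n, ee K n i * gg K n i) from
            (by simp [← AddMonoidAlgebra.coeff_inj, AddMonoidAlgebra.coeff_sum,
              AddMonoidAlgebra.coeff_single, Finsupp.single_finset_sum]),
          sum_ee_gg, single_zero_one]⟩

lemma laur_ee (i : Fin n) : laur K n (ee K n i) = AddMonoidAlgebra.single 1 (ee K n i) := by
  unfold laur
  rw [ee, RingQuot.liftAlgHom_mkAlgHom_apply, FreeAlgebra.lift_ι_apply]
  rfl

lemma laur_gg (i : Fin n) : laur K n (gg K n i) = AddMonoidAlgebra.single (-1) (gg K n i) := by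
  unfold laur
  rw [gg, RingQuot.liftAlgHom_mkAlgHom_apply, FreeAlgebra.lift_ι_apply]
  rfl

lemma laur_comp (d : ℤ) (x : LRose K n) (hx : x ∈ rComponent K n d) :
    laur K n x = AddMonoidAlgebra.single d x := by
  induction hx using Submodule.span_induction with
  | mem x hx =>
    obtain ⟨p, q, hd, rfl⟩ := hx
    have hE : ∀ l : List (Fin n), laur K n ((l.map (ee K n)).prod)
        = AddMonoidAlgebra.single (l.length : ℤ) ((l.map (ee K n)).prod) := by
      intro l
      induction l with
      | nil => simp [single_zero_one]
      | cons a l ih =>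
        simp only [List.map_cons, List.prod_cons, map_mul, ih, laur_ee,
          AddMonoidAlgebra.single_mul_single, List.length_cons]
        congr 1
        push_cast
        ring
    have hG : ∀ l : List (Fin n), laur K n ((l.map (gg K n)).prod)
        = AddMonoidAlgebra.single (-(l.length : ℤ)) ((l.map (gg K n)).prod) := by
      intro l
      induction l with
      | nil => simp [single_zero_one]
      | cons a l ih =>
        simp only [List.map_cons, List.prod_cons, map_mul, ih, laur_gg,
          AddMonoidAlgebra.single_mul_single, List.length_cons]
        congr 1
        push_cast
        ring
    rw [map_mul, hE, hG, AddMonoidAlgebra.single_mul_single]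
    congr 1
    simp at hd ⊢
    omega
  | zero => simp
  | add x y _ _ hx hy => rw [map_add, hx, hy, ← AddMonoidAlgebra.single_add]
  | smul a x _ hx => rw [map_smul, hx]; exact AddMonoidAlgebra.smul_single a d x
end Part2

lemma listsum_mem {K M : Type} [Field K] [AddCommMonoid M] [Module K M]
    (S : Submodule K M) (l : List M) (h : ∀ a ∈ l, a ∈ S) : l.sum ∈ S := by
  induction l with
  | nil => simp
  | cons a l ih =>
    rw [List.sum_cons]
    exact S.add_mem (h a (by simp)) (ih (fun b hb => h b (by simp [hb])))

lemma filter_sum {β R : Type} [AddCommMonoid R] (d : ℤ) (f : ℤ × β → R)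
    (l : List (ℤ × β)) :
    ((l.filter (fun p => p.1 = d)).map f).sum
      = (l.map (fun p => if p.1 = d then f p else 0)).sum := by
  induction l with
  | nil => simp
  | cons p l ih =>
    by_cases h : p.1 = d
    · simp [List.filter_cons, h, ih]
    · simp [List.filter_cons, h, ih]

section Part3
variable (K : Type) [Field K] (n : ℕ)

/-- upgrade a range-θ membership of a homogeneous element to a homogeneous preimage -/
lemma upgrade (θ : LRose K n →ₗ[K] LRose K n)
    (hgr : ∀ d : ℤ, ∀ x ∈ rComponent K n d, θ x ∈ rComponent K n d)
    (d : ℤ) (z : LRose K n) (hz : z ∈ rComponent K n d) (hr : z ∈ Set.range ⇑θ) :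
    ∃ u ∈ rComponent K n d, θ u = z := by
  obtain ⟨x, rfl⟩ := hr
  obtain ⟨l, hl, hx⟩ := decompose K n x
  refine ⟨((l.filter (fun p => p.1 = d)).map Prod.snd).sum, ?_, ?_⟩
  · apply listsum_mem
    intro c hc
    simp only [List.mem_map, List.mem_filter] at hc
    obtain ⟨p, ⟨hpl, hpd⟩, rfl⟩ := hc
    have : p.1 = d := by simpa using hpd
    exact this ▸ hl p hpl
  · have h1 : laur K n (θ x) = AddMonoidAlgebra.single d (θ x) := laur_comp K n d _ hz
    have h2 : laur K n (θ x) = (l.map (fun p => AddMonoidAlgebra.single p.1 (θ p.2))).sum := by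
      conv_lhs => rw [hx, map_list_sum θ, map_list_sum (laur K n)]
      simp only [List.map_map]
      congr 1
      apply List.map_congr_left
      intro p hp
      exact laur_comp K n p.1 (θ p.2) (hgr p.1 p.2 (hl p hp))
    have h3 := congrArg (fun F : AddMonoidAlgebra (LRose K n) ℤ => F.coeff d) (h1.symm.trans h2)
    have h4 : ((l.map (fun p => AddMonoidAlgebra.single p.1 (θ p.2))).sum).coeff d
        = (l.map (fun p => ((AddMonoidAlgebra.single p.1 (θ p.2)
            : AddMonoidAlgebra (LRose K n) ℤ).coeff d))).sum := by
      rw [show ((l.map (fun p => AddMonoidAlgebra.single p.1 (θ p.2))).sum).coeff d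
          = (Finsupp.applyAddHom d) (AddMonoidAlgebra.coeffAddEquiv (l.map (fun p =>
              (AddMonoidAlgebra.single p.1 (θ p.2) : AddMonoidAlgebra (LRose K n) ℤ))).sum)
          from rfl, map_list_sum, List.map_map, map_list_sum, List.map_map]
      rfl
    rw [h4] at h3
    simp only [AddMonoidAlgebra.coeff_single, Finsupp.single_apply] at h3
    rw [if_pos trivial] at h3
    rw [map_list_sum θ, List.map_map, filter_sum d]
    exact h3.symm
end Part3

section Part4
variable {K : Type} [Field K] {n : ℕ}

lemma iter_mul (φ : LRose K n →ₐ[K] LRose K n) (s : ℕ) (a b : LRose K n) :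
    (⇑φ)^[s] (a * b) = (⇑φ)^[s] a * (⇑φ)^[s] b := by
  induction s generalizing a b with
  | zero => rfl
  | succ s ih => simp only [Function.iterate_succ_apply, map_mul, ih]

lemma iter_one (φ : LRose K n →ₐ[K] LRose K n) (s : ℕ) :
    (⇑φ)^[s] (1 : LRose K n) = 1 := by
  induction s with
  | zero => rfl
  | succ s ih => simp only [Function.iterate_succ_apply, map_one, ih]

lemma iter_sum (φ : LRose K n →ₐ[K] LRose K n) (s : ℕ) {ι : Type} (t : Finset ι)
    (f : ι → LRose K n) :
    (⇑φ)^[s] (∑ i ∈ t, f i) = ∑ i ∈ t, (⇑φ)^[s] (f i) := by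
  induction s generalizing f with
  | zero => rfl
  | succ s ih => simp only [Function.iterate_succ_apply, map_sum, ih]

lemma phi_comp (M M' : Matrix (Fin n) (Fin n) (LRose K n))
    (φ : LRose K n →ₐ[K] LRose K n)
    (hM : ∀ i j, M i j ∈ rComponent K n 0 ∧ M' i j ∈ rComponent K n 0)
    (hφ : RPhiProps K n M M' φ) :
    ∀ (d : ℤ), ∀ x ∈ rComponent K n d, φ x ∈ rComponent K n d := by
  intro d x hx
  induction hx using Submodule.span_induction with
  | mem x hx =>
    obtain ⟨p, q, hd, rfl⟩ := hx
    have hE : ∀ l : List (Fin n),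
        φ ((l.map (ee K n)).prod) ∈ rComponent K n (l.length : ℤ) := by
      intro l
      induction l with
      | nil => simpa using one_mem_comp0 K n
      | cons a l ih =>
        simp only [List.map_cons, List.prod_cons, map_mul]
        have h1 : φ (ee K n a) ∈ rComponent K n 1 := by
          rw [hφ.1 a]
          apply Submodule.sum_mem
          intro k _
          simpa using comp_mul_comp K n 1 0 _ _ (ee_mem_comp1 K n k) (hM k a).1
        have := comp_mul_comp K n 1 _ _ _ h1 ih
        have harr : (1 : ℤ) + (l.length : ℤ) = ((a :: l).length : ℤ) := by
          simp only [List.length_cons]; push_cast; omega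
        rwa [harr] at this
    have hG : ∀ l : List (Fin n),
        φ ((l.map (gg K n)).prod) ∈ rComponent K n (-(l.length : ℤ)) := by
      intro l
      induction l with
      | nil => simpa using one_mem_comp0 K n
      | cons a l ih =>
        simp only [List.map_cons, List.prod_cons, map_mul]
        have h1 : φ (gg K n a) ∈ rComponent K n (-1) := by
          rw [hφ.2 a]
          apply Submodule.sum_mem
          intro k _
          simpa using comp_mul_comp K n 0 (-1) _ _ (hM a k).2 (gg_mem_compm1 K n k)
        have := comp_mul_comp K n (-1) _ _ _ h1 ih
        have harr : (-1 : ℤ) + -(l.length : ℤ) = -(((a :: l).length : ℤ)) := by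
          simp only [List.length_cons]; push_cast; omega
        rwa [harr] at this
    rw [map_mul]
    have := comp_mul_comp K n _ _ _ _ (hE p) (hG q.reverse)
    have harr : (p.length : ℤ) + -(q.reverse.length : ℤ) = d := by
      simp at hd ⊢; omega
    rwa [harr] at this
  | zero => simpa using Submodule.zero_mem _
  | add x y _ _ hx hy => rw [map_add]; exact Submodule.add_mem _ hx hy
  | smul a x _ hx => rw [map_smul]; exact Submodule.smul_mem _ a hx

lemma iter_comp (M M' : Matrix (Fin n) (Fin n) (LRose K n))
    (φ : LRose K n →ₐ[K] LRose K n)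
    (hM : ∀ i j, M i j ∈ rComponent K n 0 ∧ M' i j ∈ rComponent K n 0)
    (hφ : RPhiProps K n M M' φ) (s : ℕ) :
    ∀ (d : ℤ), ∀ x ∈ rComponent K n d, (⇑φ)^[s] x ∈ rComponent K n d := by
  induction s with
  | zero => intro d x hx; simpa using hx
  | succ s ih =>
    intro d x hx
    rw [Function.iterate_succ_apply']
    exact phi_comp M M' φ hM hφ d _ (ih d x hx)

end Part4

section Part5

theorem key (K : Type) [Field K] (n : ℕ)
    (P P' Q Q' : Matrix (Fin n) (Fin n) (LRose K n))
    (hP0 : ∀ i j, P i j ∈ rComponent K n 0 ∧ P' i j ∈ rComponent K n 0)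
    (hQ0 : ∀ i j, Q i j ∈ rComponent K n 0 ∧ Q' i j ∈ rComponent K n 0)
    (hQQ' : Q * Q' = 1) (hQ'Q : Q' * Q = 1)
    (φP φQ : LRose K n →ₐ[K] LRose K n)
    (hφP : RPhiProps K n P P' φP) (hφQ : RPhiProps K n Q Q' φQ)
    (hinv : ∀ x, φP (φQ x) = x ∧ φQ (φP x) = x)
    (Pm' Qm Qm' : ℕ → Matrix (Fin n) (Fin n) (LRose K n))
    (hPm'1 : Pm' 1 = P') (hPm'S : ∀ m, 1 ≤ m → Pm' (m + 1) = P'.map ((⇑φP)^[m]) * Pm' m)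
    (hQm1 : Qm 1 = Q) (hQmS : ∀ m, 1 ≤ m → Qm (m + 1) = Qm m * Q.map ((⇑φQ)^[m]))
    (hQm'1 : Qm' 1 = Q') (hQm'S : ∀ m, 1 ≤ m → Qm' (m + 1) = Q'.map ((⇑φQ)^[m]) * Qm' m)
    (θ : LRose K n →ₗ[K] LRose K n)
    (hgr : ∀ d : ℤ, ∀ x ∈ rComponent K n d, θ x ∈ rComponent K n d)
    (hone : θ 1 = 1)
    (hmulPos : ∀ m : ℕ, ∀ a ∈ rComponent K n (m : ℤ), ∀ b,
      θ (a * b) = θ a * (⇑φP)^[m] (θ b))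
    (hmulNeg : ∀ m : ℕ, ∀ a ∈ rComponent K n (-(m : ℤ)), ∀ b,
      θ (a * b) = θ a * (⇑φQ)^[m] (θ b))
    (hθe : ∀ i, θ (ee K n i) = ee K n i)
    (hθg : ∀ i, θ (gg K n i) = ∑ k, Q' i k * gg K n k)
    (H : ∀ m : ℕ, 1 ≤ m → ∀ i j,
      Pm' m i j ∈ Set.range ⇑θ ∧ Qm m i j ∈ Set.range ⇑θ ∧ Qm' m i j ∈ Set.range ⇑θ) :
    Function.Surjective ⇑θ := by
  classical
  -- cancellation lemmas
  have hc1 : ∀ x, φP (φQ x) = x := fun x => (hinv x).1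
  have hc2 : ∀ x, φQ (φP x) = x := fun x => (hinv x).2
  have hcanc : ∀ (s : ℕ) (x : LRose K n), (⇑φP)^[s] ((⇑φQ)^[s] x) = x := by
    intro s
    induction s with
    | zero => intro x; rfl
    | succ s ih =>
      intro x
      rw [Function.iterate_succ_apply, Function.iterate_succ_apply' ⇑φQ, hc1]
      exact ih x
  have hred : ∀ (t : ℕ) (x : LRose K n), φP ((⇑φQ)^[t + 1] x) = (⇑φQ)^[t] x := by
    intro t x
    rw [Function.iterate_succ_apply' ⇑φQ, hc1]
  -- matrix map distributes over products
  have map_mul_hom : ∀ (ψ : LRose K n →ₐ[K] LRose K n)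
      (A B : Matrix (Fin n) (Fin n) (LRose K n)),
      (A * B).map ⇑ψ = A.map ⇑ψ * B.map ⇑ψ := by
    intro ψ A B
    ext i j
    simp [Matrix.map_apply, Matrix.mul_apply, map_sum]
  -- key recursions in "left" form
  have MQ : ∀ m, 1 ≤ m → Q * (Qm m).map ⇑φQ = Qm (m + 1) := by
    intro m hm
    induction m, hm using Nat.le_induction with
    | base =>
      rw [hQm1, hQmS 1 le_rfl, hQm1, Function.iterate_one]
    | succ m hm ih =>
      rw [hQmS m hm, map_mul_hom, ← mul_assoc, ih, Matrix.map_map,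
        ← Function.iterate_succ' ⇑φQ, ← hQmS (m + 1) (by omega)]
  have MQ' : ∀ m, 1 ≤ m → (Qm' m).map ⇑φQ * Q' = Qm' (m + 1) := by
    intro m hm
    have C : ∀ m, 1 ≤ m → (Qm' m).map ⇑φQ * Q' = Q'.map ((⇑φQ)^[m]) * Qm' m := by
      intro m hm
      induction m, hm using Nat.le_induction with
      | base => rw [hQm'1, Function.iterate_one]
      | succ m hm ih =>
        calc (Qm' (m+1)).map ⇑φQ * Q'
            = (Q'.map ((⇑φQ)^[m]) * Qm' m).map ⇑φQ * Q' := by rw [hQm'S m hm]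
          _ = (Q'.map (⇑φQ ∘ (⇑φQ)^[m]) * (Qm' m).map ⇑φQ) * Q' := by
              rw [map_mul_hom φQ, Matrix.map_map]
          _ = Q'.map ((⇑φQ)^[m+1]) * ((Qm' m).map ⇑φQ * Q') := by
              rw [← Function.iterate_succ' ⇑φQ, mul_assoc]
          _ = Q'.map ((⇑φQ)^[m+1]) * (Q'.map ((⇑φQ)^[m]) * Qm' m) := by rw [ih]
          _ = Q'.map ((⇑φQ)^[m+1]) * Qm' (m+1) := by rw [← hQm'S m hm]
    rw [C m hm, ← hQm'S m hm]
  have MP' : ∀ m, 1 ≤ m → (Pm' m).map ⇑φP * P' = Pm' (m + 1) := by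
    intro m hm
    have C : ∀ m, 1 ≤ m → (Pm' m).map ⇑φP * P' = P'.map ((⇑φP)^[m]) * Pm' m := by
      intro m hm
      induction m, hm using Nat.le_induction with
      | base => rw [hPm'1, Function.iterate_one]
      | succ m hm ih =>
        calc (Pm' (m+1)).map ⇑φP * P'
            = (P'.map ((⇑φP)^[m]) * Pm' m).map ⇑φP * P' := by rw [hPm'S m hm]
          _ = (P'.map (⇑φP ∘ (⇑φP)^[m]) * (Pm' m).map ⇑φP) * P' := by
              rw [map_mul_hom φP, Matrix.map_map]
          _ = P'.map ((⇑φP)^[m+1]) * ((Pm' m).map ⇑φP * P') := by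
              rw [← Function.iterate_succ' ⇑φP, mul_assoc]
          _ = P'.map ((⇑φP)^[m+1]) * (P'.map ((⇑φP)^[m]) * Pm' m) := by rw [ih]
          _ = P'.map ((⇑φP)^[m+1]) * Pm' (m+1) := by rw [← hPm'S m hm]
    rw [C m hm, ← hPm'S m hm]
  -- twist formulas on generators
  have hTe : ∀ t, 1 ≤ t → ∀ i, (⇑φQ)^[t] (ee K n i) = ∑ k, ee K n k * Qm t k i := by
    intro t ht
    induction t, ht using Nat.le_induction with
    | base =>
      intro i
      rw [Function.iterate_one, hφQ.1 i, hQm1]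
    | succ t ht ih =>
      intro i
      rw [Function.iterate_succ_apply' ⇑φQ, ih i, map_sum]
      simp only [map_mul, hφQ.1]
      calc ∑ k, (∑ l, ee K n l * Q l k) * φQ (Qm t k i)
          = ∑ k, ∑ l, ee K n l * (Q l k * φQ (Qm t k i)) := by
            simp only [Finset.sum_mul, mul_assoc]
        _ = ∑ l, ∑ k, ee K n l * (Q l k * φQ (Qm t k i)) := Finset.sum_comm
        _ = ∑ l, ee K n l * ∑ k, Q l k * φQ (Qm t k i) := by
            simp only [← Finset.mul_sum]
        _ = ∑ l, ee K n l * Qm (t+1) l i := by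
            rw [← MQ t ht]
            simp only [Matrix.mul_apply, Matrix.map_apply]
  have hTgg : ∀ t, 1 ≤ t → ∀ j, (⇑φQ)^[t] (gg K n j) = ∑ l, Qm' t j l * gg K n l := by
    intro t ht
    induction t, ht using Nat.le_induction with
    | base =>
      intro j
      rw [Function.iterate_one, hφQ.2 j, hQm'1]
    | succ t ht ih =>
      intro j
      rw [Function.iterate_succ_apply' ⇑φQ, ih j, map_sum]
      simp only [map_mul, hφQ.2]
      calc ∑ l, φQ (Qm' t j l) * (∑ r, Q' l r * gg K n r)
          = ∑ l, ∑ r, (φQ (Qm' t j l) * Q' l r) * gg K n r := by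
            simp only [Finset.mul_sum, mul_assoc]
        _ = ∑ r, (∑ l, φQ (Qm' t j l) * Q' l r) * gg K n r := by
            rw [Finset.sum_comm]
            simp only [Finset.sum_mul]
        _ = ∑ r, Qm' (t+1) j r * gg K n r := by
            rw [← MQ' t ht]
            simp only [Matrix.mul_apply, Matrix.map_apply]
  have hTggf : ∀ s, 1 ≤ s → ∀ j, (⇑φP)^[s] (gg K n j) = ∑ l, Pm' s j l * gg K n l := by
    intro s hs
    induction s, hs using Nat.le_induction with
    | base =>
      intro j
      rw [Function.iterate_one, hφP.2 j, hPm'1]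
    | succ s hs ih =>
      intro j
      rw [Function.iterate_succ_apply' ⇑φP, ih j, map_sum]
      simp only [map_mul, hφP.2]
      calc ∑ l, φP (Pm' s j l) * (∑ r, P' l r * gg K n r)
          = ∑ l, ∑ r, (φP (Pm' s j l) * P' l r) * gg K n r := by
            simp only [Finset.mul_sum, mul_assoc]
        _ = ∑ r, (∑ l, φP (Pm' s j l) * P' l r) * gg K n r := by
            rw [Finset.sum_comm]
            simp only [Finset.sum_mul]
        _ = ∑ r, Pm' (s+1) j r * gg K n r := by
            rw [← MP' s hs]
            simp only [Matrix.mul_apply, Matrix.map_apply]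
  -- degree-0 membership of matrix entries
  have hQmc : ∀ m, 1 ≤ m → ∀ i j, Qm m i j ∈ rComponent K n 0 := by
    intro m hm
    induction m, hm using Nat.le_induction with
    | base => intro i j; rw [hQm1]; exact (hQ0 i j).1
    | succ m hm ih =>
      intro i j
      rw [hQmS m hm, Matrix.mul_apply]
      apply Submodule.sum_mem
      intro k _
      have h2 : (Q.map ((⇑φQ)^[m])) k j ∈ rComponent K n 0 :=
        iter_comp Q Q' φQ hQ0 hφQ m 0 _ (hQ0 k j).1
      simpa using comp_mul_comp K n 0 0 _ _ (ih i k) h2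
  have hQm'c : ∀ m, 1 ≤ m → ∀ i j, Qm' m i j ∈ rComponent K n 0 := by
    intro m hm
    induction m, hm using Nat.le_induction with
    | base => intro i j; rw [hQm'1]; exact (hQ0 i j).2
    | succ m hm ih =>
      intro i j
      rw [hQm'S m hm, Matrix.mul_apply]
      apply Submodule.sum_mem
      intro k _
      have h2 : (Q'.map ((⇑φQ)^[m])) i k ∈ rComponent K n 0 :=
        iter_comp Q Q' φQ hQ0 hφQ m 0 _ (hQ0 i k).2
      simpa using comp_mul_comp K n 0 0 _ _ h2 (ih k j)
  have hPm'c : ∀ m, 1 ≤ m → ∀ i j, Pm' m i j ∈ rComponent K n 0 := by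
    intro m hm
    induction m, hm using Nat.le_induction with
    | base => intro i j; rw [hPm'1]; exact (hP0 i j).2
    | succ m hm ih =>
      intro i j
      rw [hPm'S m hm, Matrix.mul_apply]
      apply Submodule.sum_mem
      intro k _
      have h2 : (P'.map ((⇑φP)^[m])) i k ∈ rComponent K n 0 :=
        iter_comp P P' φP hP0 hφP m 0 _ (hP0 i k).2
      simpa using comp_mul_comp K n 0 0 _ _ h2 (ih k j)
  -- θ-image (with homogeneous preimage) memberships
  have hQmD : ∀ m, 1 ≤ m → ∀ i j, Qm m i j ∈ (rComponent K n 0).map θ := by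
    intro m hm i j
    obtain ⟨u, hu, h2⟩ := upgrade K n θ hgr 0 _ (hQmc m hm i j) (H m hm i j).2.1
    exact Submodule.mem_map.2 ⟨u, hu, h2⟩
  have hQm'D : ∀ m, 1 ≤ m → ∀ i j, Qm' m i j ∈ (rComponent K n 0).map θ := by
    intro m hm i j
    obtain ⟨u, hu, h2⟩ := upgrade K n θ hgr 0 _ (hQm'c m hm i j) (H m hm i j).2.2
    exact Submodule.mem_map.2 ⟨u, hu, h2⟩
  have hPm'D : ∀ m, 1 ≤ m → ∀ i j, Pm' m i j ∈ (rComponent K n 0).map θ := by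
    intro m hm i j
    obtain ⟨u, hu, h2⟩ := upgrade K n θ hgr 0 _ (hPm'c m hm i j) (H m hm i j).1
    exact Submodule.mem_map.2 ⟨u, hu, h2⟩
  -- multiplication laws for the image submodules
  have hmul0 : ∀ (z y : LRose K n) (d : ℤ), z ∈ (rComponent K n 0).map θ →
      y ∈ (rComponent K n d).map θ → z * y ∈ (rComponent K n d).map θ := by
    intro z y d hz hy
    obtain ⟨u, hu, rfl⟩ := Submodule.mem_map.1 hz
    obtain ⟨v, hv, rfl⟩ := Submodule.mem_map.1 hy
    refine Submodule.mem_map.2 ⟨u * v, ?_, ?_⟩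
    · have := comp_mul_comp K n 0 d _ _ hu hv
      rwa [zero_add] at this
    · rw [hmulPos 0 u (by simpa using hu) v]
      simp
  have hEmul : ∀ (k : Fin n) (y : LRose K n) (d : ℤ), φQ y ∈ (rComponent K n d).map θ →
      ee K n k * y ∈ (rComponent K n (1 + d)).map θ := by
    intro k y d hy
    obtain ⟨v, hv, hvy⟩ := Submodule.mem_map.1 hy
    refine Submodule.mem_map.2 ⟨ee K n k * v, comp_mul_comp K n 1 d _ _ (ee_mem_comp1 K n k) hv, ?_⟩
    rw [hmulPos 1 (ee K n k) (by simpa using ee_mem_comp1 K n k) v, hθe]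
    simp only [Function.iterate_one]
    rw [hvy, hc1]
  have hggD : ∀ l, gg K n l ∈ (rComponent K n (-1)).map θ := by
    intro l
    have hval : (∑ i, Q l i * θ (gg K n i)) = gg K n l := by
      simp only [hθg, Finset.mul_sum]
      rw [Finset.sum_comm]
      have h1 : ∀ k, (∑ i, Q l i * (Q' i k * gg K n k)) = ((Q * Q') l k) * gg K n k := by
        intro k
        rw [Matrix.mul_apply, Finset.sum_mul]
        simp [mul_assoc]
      simp only [h1, hQQ', Matrix.one_apply, ite_mul, one_mul, zero_mul]
      simp
    rw [← hval]
    apply Submodule.sum_mem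
    intro i _
    apply hmul0
    · have := hQmD 1 le_rfl l i
      rwa [hQm1] at this
    · exact Submodule.mem_map.2 ⟨gg K n i, gg_mem_compm1 K n i, rfl⟩
  have hGmul : ∀ (l : Fin n) (y : LRose K n) (d : ℤ), φP y ∈ (rComponent K n d).map θ →
      gg K n l * y ∈ (rComponent K n (-1 + d)).map θ := by
    intro l y d hy
    obtain ⟨v, hv, hvy⟩ := Submodule.mem_map.1 hy
    obtain ⟨u, hu, hul⟩ := Submodule.mem_map.1 (hggD l)
    refine Submodule.mem_map.2 ⟨u * v, comp_mul_comp K n (-1) d _ _ hu hv, ?_⟩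
    rw [hmulNeg 1 u (by simpa using hu) v]
    simp only [Function.iterate_one]
    rw [hul, hvy, hc2]
  -- φQ of an entry of Qm t lands in the image submodule
  have hgQmD : ∀ t, 1 ≤ t → ∀ k a, φQ (Qm t k a) ∈ (rComponent K n 0).map θ := by
    intro t ht k a
    have hid : (Qm t).map ⇑φQ = Q' * Qm (t + 1) := by
      have h1 : Q' * (Q * (Qm t).map ⇑φQ) = Q' * Qm (t + 1) := by rw [MQ t ht]
      rwa [← mul_assoc, hQ'Q, one_mul] at h1
    have h2 : φQ (Qm t k a) = ∑ r, Q' k r * Qm (t + 1) r a := by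
      have := congrArg (fun M : Matrix (Fin n) (Fin n) (LRose K n) => M k a) hid
      simpa [Matrix.map_apply, Matrix.mul_apply] using this
    rw [h2]
    apply Submodule.sum_mem
    intro r _
    apply hmul0
    · have := hQm'D 1 le_rfl k r
      rwa [hQm'1] at this
    · exact hQmD (t + 1) (by omega) r a
  -- e-words: all φQ-twists have homogeneous preimages
  have hE : ∀ (p : List (Fin n)) (t : ℕ),
      (⇑φQ)^[t] ((p.map (ee K n)).prod) ∈ (rComponent K n (p.length : ℤ)).map θ := by
    intro p
    induction p with
    | nil =>
      intro t
      simp only [List.map_nil, List.prod_nil, iter_one φQ t, List.length_nil,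
        Nat.cast_zero]
      exact Submodule.mem_map.2 ⟨1, one_mem_comp0 K n, hone⟩
    | cons a p ih =>
      intro t
      have hdeg : (((a :: p).length : ℕ) : ℤ) = 1 + (p.length : ℤ) := by
        simp only [List.length_cons]; push_cast; omega
      have hval : (⇑φQ)^[t] (((a :: p).map (ee K n)).prod)
          = (⇑φQ)^[t] (ee K n a) * (⇑φQ)^[t] ((p.map (ee K n)).prod) := by
        simp only [List.map_cons, List.prod_cons]
        exact iter_mul φQ t _ _
      rw [hdeg, hval]
      rcases Nat.eq_zero_or_pos t with ht | ht
      · subst ht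
        simp only [Function.iterate_zero, id_eq]
        apply hEmul
        have := ih 1
        rwa [Function.iterate_one] at this
      · rw [hTe t ht a, Finset.sum_mul]
        apply Submodule.sum_mem
        intro k _
        rw [mul_assoc]
        apply hEmul
        have hsplit : φQ (Qm t k a * (⇑φQ)^[t] ((p.map (ee K n)).prod))
            = φQ (Qm t k a) * (⇑φQ)^[t+1] ((p.map (ee K n)).prod) := by
          rw [map_mul, Function.iterate_succ_apply' ⇑φQ]
        rw [hsplit]
        exact hmul0 _ _ _ (hgQmD t ht k a) (ih (t + 1))
  -- g-words: all twists (in both directions) have homogeneous preimages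
  have hG : ∀ (l : List (Fin n)),
      (∀ s : ℕ, (⇑φP)^[s] ((l.map (gg K n)).prod) ∈ (rComponent K n (-(l.length : ℤ))).map θ) ∧
      (∀ t : ℕ, (⇑φQ)^[t] ((l.map (gg K n)).prod) ∈ (rComponent K n (-(l.length : ℤ))).map θ) := by
    intro l
    induction l with
    | nil =>
      constructor
      · intro s
        simp only [List.map_nil, List.prod_nil, iter_one φP s, List.length_nil,
          Nat.cast_zero, neg_zero]
        exact Submodule.mem_map.2 ⟨1, one_mem_comp0 K n, hone⟩
      · intro t
        simp only [List.map_nil, List.prod_nil, iter_one φQ t, List.length_nil,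
          Nat.cast_zero, neg_zero]
        exact Submodule.mem_map.2 ⟨1, one_mem_comp0 K n, hone⟩
    | cons a l ih =>
      obtain ⟨ihf, ihg⟩ := ih
      have hdeg : -(((a :: l).length : ℕ) : ℤ) = -1 + -(l.length : ℤ) := by
        simp only [List.length_cons]; push_cast; omega
      have hbase : gg K n a * (l.map (gg K n)).prod
          ∈ (rComponent K n (-1 + -(l.length : ℤ))).map θ := by
        apply hGmul
        have := ihf 1
        rwa [Function.iterate_one] at this
      constructor
      · intro s
        rw [hdeg]
        have hval : (⇑φP)^[s] (((a :: l).map (gg K n)).prod)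
            = (⇑φP)^[s] (gg K n a) * (⇑φP)^[s] ((l.map (gg K n)).prod) := by
          simp only [List.map_cons, List.prod_cons]
          exact iter_mul φP s _ _
        rw [hval]
        rcases Nat.eq_zero_or_pos s with hs | hs
        · subst hs
          simpa only [Function.iterate_zero, id_eq] using hbase
        · rw [hTggf s hs a, Finset.sum_mul]
          apply Submodule.sum_mem
          intro k _
          rw [mul_assoc]
          apply hmul0 _ _ _ (hPm'D s hs a k)
          apply hGmul
          have hsplit : φP ((⇑φP)^[s] ((l.map (gg K n)).prod))
              = (⇑φP)^[s+1] ((l.map (gg K n)).prod) :=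
            (Function.iterate_succ_apply' ⇑φP s _).symm
          rw [hsplit]
          exact ihf (s + 1)
      · intro t
        rw [hdeg]
        have hval : (⇑φQ)^[t] (((a :: l).map (gg K n)).prod)
            = (⇑φQ)^[t] (gg K n a) * (⇑φQ)^[t] ((l.map (gg K n)).prod) := by
          simp only [List.map_cons, List.prod_cons]
          exact iter_mul φQ t _ _
        rw [hval]
        cases t with
        | zero =>
          simpa only [Function.iterate_zero, id_eq] using hbase
        | succ t' =>
          rw [hTgg (t' + 1) (by omega) a, Finset.sum_mul]
          apply Submodule.sum_mem
          intro k _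
          rw [mul_assoc]
          apply hmul0 _ _ _ (hQm'D (t' + 1) (by omega) a k)
          apply hGmul
          rw [hred t']
          exact ihg t'
  -- every normal monomial is in the range of θ
  have hMONO : ∀ (p q : List (Fin n)),
      (p.map (ee K n)).prod * (q.map (gg K n)).prod ∈ LinearMap.range θ := by
    intro p q
    obtain ⟨u, hu, hu2⟩ := Submodule.mem_map.1 (hE p 0)
    obtain ⟨v, hv, hv2⟩ := Submodule.mem_map.1 ((hG q).2 p.length)
    refine ⟨u * v, ?_⟩
    rw [hmulPos p.length u hu v, hu2, hv2]
    simp only [Function.iterate_zero, id_eq]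
    rw [hcanc]
  -- each homogeneous component is contained in the range
  have hcompR : ∀ (d : ℤ) (z : LRose K n), z ∈ rComponent K n d →
      z ∈ LinearMap.range θ := by
    intro d z hz
    induction hz using Submodule.span_induction with
    | mem x hx =>
      obtain ⟨p, q, hd, rfl⟩ := hx
      exact hMONO p q.reverse
    | zero => exact Submodule.zero_mem _
    | add x y _ _ hx hy => exact Submodule.add_mem _ hx hy
    | smul c x _ hx => exact Submodule.smul_mem _ c hx
  -- conclude
  intro y
  obtain ⟨lst, hlst, rfl⟩ := decompose K n y
  have hmem : ((lst.map Prod.snd).sum) ∈ LinearMap.range θ := by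
    apply listsum_mem
    intro c hc
    simp only [List.mem_map] at hc
    obtain ⟨pr, hpr, rfl⟩ := hc
    exact hcompR pr.1 pr.2 (hlst pr hpr)
  obtain ⟨x, hx⟩ := hmem
  exact ⟨x, hx⟩
end Part5

end Aux

/-- Let `P, Q ∈ GL_n(L_K(R_n)_0)` with `P φ_P(Q) = I_n` (so `φ_P` is a
graded automorphism with inverse `φ_Q`).  The graded injective homomorphism
`θ_P : L_K(R_n) → L_K(R_n)^{φ_P}` (determined by `θ_P(1) = 1`, `θ_P(e_i) = e_i`,
`θ_P(e_i*) = Σ_k q^{(-1)}_{ik} e_k*`) is an isomorphism iff all entries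
`p^{(-m)}_{ij}, q^{(m)}_{ij}, q^{(-m)}_{ij}` lie in its image for all `m ≥ 1`. -/
theorem stmt13 (K : Type) [Field K] (n : ℕ) (hn : 2 ≤ n)
    (P P' Q Q' : Matrix (Fin n) (Fin n) (LRose K n))
    (hP0 : ∀ i j, P i j ∈ rComponent K n 0 ∧ P' i j ∈ rComponent K n 0)
    (hQ0 : ∀ i j, Q i j ∈ rComponent K n 0 ∧ Q' i j ∈ rComponent K n 0)
    (hPP' : P * P' = 1) (hP'P : P' * P = 1) (hQQ' : Q * Q' = 1) (hQ'Q : Q' * Q = 1)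
    (φP φQ : LRose K n →ₐ[K] LRose K n)
    (hφP : RPhiProps K n P P' φP) (hφQ : RPhiProps K n Q Q' φQ)
    (hPQ : P * Q.map ⇑φP = 1)
    (hinv : ∀ x, φP (φQ x) = x ∧ φQ (φP x) = x)
    (Pm Pm' Qm Qm' : ℕ → Matrix (Fin n) (Fin n) (LRose K n))
    (hPm1 : Pm 1 = P) (hPmS : ∀ m, 1 ≤ m → Pm (m + 1) = Pm m * P.map ((⇑φP)^[m]))
    (hPm'1 : Pm' 1 = P') (hPm'S : ∀ m, 1 ≤ m → Pm' (m + 1) = P'.map ((⇑φP)^[m]) * Pm' m)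
    (hQm1 : Qm 1 = Q) (hQmS : ∀ m, 1 ≤ m → Qm (m + 1) = Qm m * Q.map ((⇑φQ)^[m]))
    (hQm'1 : Qm' 1 = Q') (hQm'S : ∀ m, 1 ≤ m → Qm' (m + 1) = Q'.map ((⇑φQ)^[m]) * Qm' m)
    (θ : LRose K n →ₗ[K] LRose K n)
    (hinj : Function.Injective ⇑θ)
    (hgr : ∀ d : ℤ, ∀ x ∈ rComponent K n d, θ x ∈ rComponent K n d)
    (hone : θ 1 = 1)
    (hmulPos : ∀ m : ℕ, ∀ a ∈ rComponent K n (m : ℤ), ∀ b,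
      θ (a * b) = θ a * (⇑φP)^[m] (θ b))
    (hmulNeg : ∀ m : ℕ, ∀ a ∈ rComponent K n (-(m : ℤ)), ∀ b,
      θ (a * b) = θ a * (⇑φQ)^[m] (θ b))
    (hθe : ∀ i, θ (ee K n i) = ee K n i)
    (hθg : ∀ i, θ (gg K n i) = ∑ k, Q' i k * gg K n k) :
    Function.Surjective ⇑θ ↔
      ∀ m : ℕ, 1 ≤ m → ∀ i j,
        Pm' m i j ∈ Set.range ⇑θ ∧ Qm m i j ∈ Set.range ⇑θ ∧ Qm' m i j ∈ Set.range ⇑θ := by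
  constructor
  · intro hsurj m hm i j
    exact ⟨hsurj _, hsurj _, hsurj _⟩
  · intro H
    exact key K n P P' Q Q' hP0 hQ0 hQQ' hQ'Q φP φQ hφP hφQ hinv Pm' Qm Qm'
      hPm'1 hPm'S hQm1 hQmS hQm'1 hQm'S θ hgr hone hmulPos hmulNeg hθe hθg H
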